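/- Let 0 < s < 1, let Ω ⊆ ℝ^N be an open bounded set, and let {u_n} ⊆ C(Ω̄) with u_n ∈ W^{s,p_n}(Ω) for an increasing sequence p_n → ∞, such that liminf_n [u_n]_{W^{s,p_n}(Ω)} < +∞. If u_n converges pointwise on Ω̄ to a continuous function u, then u ∈ C^{0,s}(Ω̄) and [u]_{C^{0,s}(Ω̄)} ≤ liminf_n [u_n]_{W^{s,p_n}(Ω)}. -/

import Mathlib

open MeasureTheory ENNReal Filter Metric Set Topology

noncomputable section

abbrev Euc (N : ℕ) := EuclideanSpace ℝ (Fin N)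

/-- Homogeneous Hölder seminorm `[u]_{C^{0,α}(Ω)}`, `ℝ≥0∞`-valued. -/
noncomputable def holderSemi {N : ℕ} (Ω : Set (Euc N)) (α : ℝ) (u : Euc N → ℝ) : ℝ≥0∞ :=
  ⨆ (x : Ω) (y : Ω) (_ : x.1 ≠ y.1),
    ENNReal.ofReal (|u x.1 - u y.1| / ‖x.1 - y.1‖ ^ α)

/-- `p`-th power of the Gagliardo seminorm `[u]_{W^{s,p}(Ω)}^p`. -/
noncomputable def gagliardoP {N : ℕ} (Ω : Set (Euc N)) (s p : ℝ) (u : Euc N → ℝ) : ℝ≥0∞ :=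
  ∫⁻ x in Ω, ∫⁻ y in Ω,
    ENNReal.ofReal (|u x - u y| ^ p / ‖x - y‖ ^ ((N : ℝ) + s * p))

/-- Gagliardo seminorm `[u]_{W^{s,p}(Ω)}`. -/
noncomputable def gagliardoSemi {N : ℕ} (Ω : Set (Euc N)) (s p : ℝ) (u : Euc N → ℝ) : ℝ≥0∞ :=
  gagliardoP Ω s p u ^ (1 / p)

/-- Key interior estimate: for interior points `x0 ≠ y0` of `Ω`, the Hölder quotient of the
pointwise limit `u` is bounded by the liminf of the Gagliardo seminorms. -/
theorem key_lemma {N : ℕ} (s : ℝ) (hs0 : 0 < s)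
    (Ω : Set (Euc N)) (hΩ : IsOpen Ω)
    (un : ℕ → Euc N → ℝ) (hcont : ∀ n, ContinuousOn (un n) (closure Ω))
    (pn : ℕ → ℝ) (hpn1 : ∀ n, 1 < pn n)
    (hpntop : Tendsto pn atTop atTop)
    (u : Euc N → ℝ)
    (hu : ContinuousOn u (closure Ω))
    (hconv : ∀ x ∈ closure Ω, Tendsto (fun n => un n x) atTop (nhds (u x)))
    (x0 y0 : Euc N) (hx0 : x0 ∈ Ω) (hy0 : y0 ∈ Ω) (hne : x0 ≠ y0) :
    ENNReal.ofReal (|u x0 - u y0| / ‖x0 - y0‖ ^ s) ≤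
      Filter.liminf (fun n => gagliardoSemi Ω s (pn n) (un n)) atTop := by
  classical
  refine ENNReal.le_of_forall_nnreal_lt (fun c hc => ?_)
  set r := ‖x0 - y0‖ with hr
  have hrpos : 0 < r := by rw [hr, norm_pos_iff, sub_ne_zero]; exact hne
  have hrs : 0 < r ^ s := Real.rpow_pos_of_pos hrpos s
  set D := |u x0 - u y0| with hD
  set Q := D / r ^ s with hQ
  have hQpos : 0 < Q := ENNReal.ofReal_pos.mp ((zero_le : (0:ℝ≥0∞) ≤ c).trans_lt hc)
  set t := (c : ℝ) with htdef
  have htnn : 0 ≤ t := c.2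
  have ht : t < Q := by
    rw [← ENNReal.ofReal_coe_nnreal] at hc
    exact (ENNReal.ofReal_lt_ofReal_iff hQpos).mp hc
  set t₁ := (t + Q) / 2 with ht₁def
  have ht₁t : t < t₁ := by rw [ht₁def]; linarith
  have ht₁Q : t₁ < Q := by rw [ht₁def]; linarith
  have ht₁pos : 0 < t₁ := lt_of_le_of_lt htnn ht₁t
  have ht₁r : t₁ * r ^ s < D := by
    have := (lt_div_iff₀ hrs).mp ht₁Q
    linarith
  set M := (D + t₁ * r ^ s) / 2 with hMdef
  have hMlt1 : t₁ * r ^ s < M := by rw [hMdef]; linarith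
  have hMlt2 : M < D := by rw [hMdef]; linarith
  have hMpos : 0 < M := lt_trans (by positivity) hMlt1
  set η := (D - M) / 3 with hηdef
  have hηpos : 0 < η := by rw [hηdef]; linarith
  have hDM : D - 3 * η = M := by rw [hηdef]; ring
  -- continuity of u at x0, y0
  have hux0 : ContinuousAt u x0 := (hu.mono subset_closure).continuousAt (hΩ.mem_nhds hx0)
  have huy0 : ContinuousAt u y0 := (hu.mono subset_closure).continuousAt (hΩ.mem_nhds hy0)
  obtain ⟨δ₁, hδ₁pos, hδ₁⟩ := Metric.continuousAt_iff.mp hux0 η hηpos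
  obtain ⟨δ₂, hδ₂pos, hδ₂⟩ := Metric.continuousAt_iff.mp huy0 η hηpos
  obtain ⟨δ₃, hδ₃pos, hδ₃⟩ := Metric.isOpen_iff.mp hΩ x0 hx0
  obtain ⟨δ₄, hδ₄pos, hδ₄⟩ := Metric.isOpen_iff.mp hΩ y0 hy0
  -- choose δ
  have hψcont : ContinuousAt (fun d : ℝ => t₁ * (r + 2 * d) ^ s) 0 := by
    refine ContinuousAt.mul continuousAt_const ?_
    refine ContinuousAt.rpow ?_ continuousAt_const (Or.inl ?_)
    · fun_prop
    · simpa using hrpos.ne'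
  have hψ0 : t₁ * (r + 2 * (0:ℝ)) ^ s < M := by simpa using hMlt1
  have hevψ : ∀ᶠ d in 𝓝[>] (0:ℝ), t₁ * (r + 2 * d) ^ s < M :=
    eventually_nhdsWithin_of_eventually_nhds (hψcont.tendsto.eventually_lt_const hψ0)
  have hevlt : ∀ᶠ d in 𝓝[>] (0:ℝ),
      d < min (min δ₁ δ₂) (min (min δ₃ δ₄) (r / 4)) :=
    eventually_nhdsWithin_of_eventually_nhds (eventually_lt_nhds (by positivity))
  obtain ⟨δ, hδmem, hψδ, hδlt⟩ := (eventually_mem_nhdsWithin.and (hevψ.and hevlt)).exists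
  have hδpos : 0 < δ := hδmem
  obtain ⟨⟨hδa, hδb⟩, ⟨⟨hδc, hδd⟩, hδe⟩⟩ :
      (δ < δ₁ ∧ δ < δ₂) ∧ (δ < δ₃ ∧ δ < δ₄) ∧ δ < r / 4 := by
    constructor
    · exact ⟨(hδlt.trans_le (min_le_left _ _)).trans_le (min_le_left _ _),
        (hδlt.trans_le (min_le_left _ _)).trans_le (min_le_right _ _)⟩
    · refine ⟨⟨?_, ?_⟩, ?_⟩
      · exact ((hδlt.trans_le (min_le_right _ _)).trans_le (min_le_left _ _)).trans_le
          (min_le_left _ _)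
      · exact ((hδlt.trans_le (min_le_right _ _)).trans_le (min_le_left _ _)).trans_le
          (min_le_right _ _)
      · exact (hδlt.trans_le (min_le_right _ _)).trans_le (min_le_right _ _)
  set B1 := Metric.ball x0 δ with hB1
  set B2 := Metric.ball y0 δ with hB2
  have hB1Ω : B1 ⊆ Ω := (Metric.ball_subset_ball hδc.le).trans hδ₃
  have hB2Ω : B2 ⊆ Ω := (Metric.ball_subset_ball hδd.le).trans hδ₄
  set R := r + 2 * δ with hRdef
  have hRpos : 0 < R := by rw [hRdef]; linarith
  -- pointwise bounds on B1 × B2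
  have hxyR : ∀ x ∈ B1, ∀ y ∈ B2, ‖x - y‖ ≤ R := by
    intro x hx y hy
    rw [← dist_eq_norm]
    have h4 := dist_triangle4 x x0 y0 y
    have h1 : dist x x0 < δ := Metric.mem_ball.mp hx
    have h2 : dist y0 y < δ := by rw [dist_comm]; exact Metric.mem_ball.mp hy
    have h3 : dist x0 y0 = r := by rw [dist_eq_norm]
    rw [hRdef]; linarith
  have hxy0 : ∀ x ∈ B1, ∀ y ∈ B2, 0 < ‖x - y‖ := by
    intro x hx y hy
    have h4 := dist_triangle4 x0 x y y0
    have h1 : dist x0 x < δ := by rw [dist_comm]; exact Metric.mem_ball.mp hx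
    have h2 : dist y y0 < δ := Metric.mem_ball.mp hy
    have h3 : dist x0 y0 = r := by rw [dist_eq_norm]
    have : 0 < dist x y := by linarith
    rwa [dist_eq_norm] at this
  have huxy : ∀ x ∈ B1, ∀ y ∈ B2, M < |u x - u y| := by
    intro x hx y hy
    have h1 : |u x - u x0| < η := by
      rw [← Real.dist_eq]; exact hδ₁ ((Metric.mem_ball.mp hx).trans hδa)
    have h2 : |u y - u y0| < η := by
      rw [← Real.dist_eq]; exact hδ₂ ((Metric.mem_ball.mp hy).trans hδb)
    have h3 : |(u x0 - u y0) - (u x - u y)| ≤ |u x - u x0| + |u y - u y0| := by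
      have he : (u x0 - u y0) - (u x - u y) = -(u x - u x0) + (u y - u y0) := by ring
      calc |(u x0 - u y0) - (u x - u y)| = |(-(u x - u x0)) + (u y - u y0)| := by rw [he]
        _ ≤ |(-(u x - u x0))| + |u y - u y0| := abs_add_le _ _
        _ = |u x - u x0| + |u y - u y0| := by rw [abs_neg]
    have h4 : |u x0 - u y0| - |u x - u y| ≤ |(u x0 - u y0) - (u x - u y)| :=
      abs_sub_abs_le_abs_sub _ _
    have : D - |u x - u y| < 2 * η := by rw [hD]; linarith
    have hDM' : D - 2 * η > M := by rw [← hDM]; linarith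
    linarith
  -- the sets E n
  set E : ℕ → Set (Euc N × Euc N) :=
    fun n => (B1 ×ˢ B2) ∩ {z | M < |un n z.1 - un n z.2|} with hE
  have hEopen : ∀ n, IsOpen (E n) := by
    intro n
    have hc1 : ContinuousOn (fun z : Euc N × Euc N => |un n z.1 - un n z.2|) (B1 ×ˢ B2) := by
      apply ContinuousOn.abs
      apply ContinuousOn.sub
      · exact (hcont n).comp continuousOn_fst
          (fun z hz => subset_closure (hB1Ω hz.1))
      · exact (hcont n).comp continuousOn_snd
          (fun z hz => subset_closure (hB2Ω hz.2))
    exact hc1.isOpen_inter_preimage (isOpen_ball.prod isOpen_ball) isOpen_Ioi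
  set ν := (volume.restrict B1).prod (volume.restrict B2) with hν
  -- core integral bound
  have hgag : ∀ n, ENNReal.ofReal ((D - 3 * η) ^ (pn n) / R ^ ((N : ℝ) + s * pn n)) * ν (E n)
      ≤ gagliardoP Ω s (pn n) (un n) := by
    intro n
    set p := pn n with hp
    have hp0 : 0 < p := zero_lt_one.trans (hpn1 n)
    set cst := ENNReal.ofReal ((D - 3 * η) ^ p / R ^ ((N : ℝ) + s * p)) with hcst
    have hmeas : Measurable ((E n).indicator (fun _ => cst)) :=
      measurable_const.indicator (hEopen n).measurableSet
    calc cst * ν (E n)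
        = ∫⁻ z, (E n).indicator (fun _ => cst) z ∂ν := by
          rw [lintegral_indicator (hEopen n).measurableSet, setLIntegral_const]
      _ = ∫⁻ x in B1, ∫⁻ y in B2, (E n).indicator (fun _ => cst) (x, y) := by
          rw [hν, lintegral_prod _ hmeas.aemeasurable]
      _ ≤ ∫⁻ x in B1, ∫⁻ y in B2,
            ENNReal.ofReal (|un n x - un n y| ^ p / ‖x - y‖ ^ ((N : ℝ) + s * p)) := by
          refine lintegral_mono fun x => lintegral_mono fun y => ?_
          by_cases hz : (x, y) ∈ E n
          · rw [Set.indicator_of_mem hz]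
            obtain ⟨⟨hx, hy⟩, hzu⟩ := hz
            apply ENNReal.ofReal_le_ofReal
            have h1 : 0 < ‖x - y‖ := hxy0 x hx y hy
            have hApos : (0:ℝ) < D - 3 * η := by rw [hDM]; exact hMpos
            have num : (D - 3 * η) ^ p ≤ |un n x - un n y| ^ p := by
              apply Real.rpow_le_rpow hApos.le _ hp0.le
              rw [hDM]; exact (hzu : M < _).le
            have den : ‖x - y‖ ^ ((N : ℝ) + s * p) ≤ R ^ ((N : ℝ) + s * p) :=
              Real.rpow_le_rpow (norm_nonneg _) (hxyR x hx y hy) (by positivity)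
            have denpos : 0 < ‖x - y‖ ^ ((N : ℝ) + s * p) := Real.rpow_pos_of_pos h1 _
            exact div_le_div₀ (by positivity) num denpos den
          · rw [Set.indicator_of_notMem hz]; exact zero_le
      _ ≤ ∫⁻ x in B1, ∫⁻ y in Ω,
            ENNReal.ofReal (|un n x - un n y| ^ p / ‖x - y‖ ^ ((N : ℝ) + s * p)) :=
          lintegral_mono fun x => lintegral_mono' (Measure.restrict_mono hB2Ω le_rfl) le_rfl
      _ ≤ ∫⁻ x in Ω, ∫⁻ y in Ω,
            ENNReal.ofReal (|un n x - un n y| ^ p / ‖x - y‖ ^ ((N : ℝ) + s * p)) :=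
          lintegral_mono' (Measure.restrict_mono hB1Ω le_rfl) le_rfl
      _ = gagliardoP Ω s p (un n) := rfl
  -- Fatou step
  have hVeq : ν (B1 ×ˢ B2) = volume B1 * volume B2 := by
    rw [hν, Measure.prod_prod, Measure.restrict_apply_self, Measure.restrict_apply_self]
  set V := ν (B1 ×ˢ B2) with hV
  have hVpos : 0 < V := by
    rw [hVeq]
    exact ENNReal.mul_pos (measure_ball_pos _ _ hδpos).ne' (measure_ball_pos _ _ hδpos).ne'
  have hVtop : V ≠ ⊤ := by
    rw [hVeq]
    exact ENNReal.mul_ne_top measure_ball_lt_top.ne measure_ball_lt_top.ne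
  have hFatou : V ≤ Filter.liminf (fun n => ν (E n)) atTop := by
    have h1 : ∀ n, Measurable fun z => (E n).indicator (fun _ => (1 : ℝ≥0∞)) z := fun n =>
      measurable_const.indicator (hEopen n).measurableSet
    calc V = ∫⁻ z, (B1 ×ˢ B2).indicator (fun _ => (1 : ℝ≥0∞)) z ∂ν := by
          rw [lintegral_indicator (isOpen_ball.prod isOpen_ball).measurableSet,
            setLIntegral_one]
      _ ≤ ∫⁻ z, Filter.liminf (fun n => (E n).indicator (fun _ => (1 : ℝ≥0∞)) z) atTop ∂ν := by
          refine lintegral_mono fun z => ?_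
          by_cases hz : z ∈ B1 ×ˢ B2
          · rw [Set.indicator_of_mem hz]
            refine Filter.le_liminf_of_le (by isBoundedDefault) ?_
            obtain ⟨hzx, hzy⟩ := hz
            have hx' : z.1 ∈ closure Ω := subset_closure (hB1Ω hzx)
            have hy' : z.2 ∈ closure Ω := subset_closure (hB2Ω hzy)
            have htend : Tendsto (fun n => |un n z.1 - un n z.2|) atTop
                (𝓝 |u z.1 - u z.2|) := ((hconv z.1 hx').sub (hconv z.2 hy')).abs
            have hev : ∀ᶠ n in atTop, M < |un n z.1 - un n z.2| :=
              htend.eventually_const_lt (huxy z.1 hzx z.2 hzy)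
            filter_upwards [hev] with n hn
            rw [Set.indicator_of_mem (show (z : Euc N × Euc N) ∈ E n from ⟨⟨hzx, hzy⟩, hn⟩)]
          · rw [Set.indicator_of_notMem hz]; exact zero_le
      _ ≤ Filter.liminf (fun n => ∫⁻ z, (E n).indicator (fun _ => (1 : ℝ≥0∞)) z ∂ν) atTop :=
          lintegral_liminf_le h1
      _ = Filter.liminf (fun n => ν (E n)) atTop := by
          refine Filter.liminf_congr (Eventually.of_forall fun n => ?_)
          rw [lintegral_indicator (hEopen n).measurableSet, setLIntegral_one]
  -- the constant w
  have hV2ne : V / 2 ≠ 0 := by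
    simp only [ne_eq, ENNReal.div_eq_zero_iff, not_or]
    exact ⟨hVpos.ne', by simp⟩
  have hV2top : V / 2 ≠ ⊤ := by
    exact (ENNReal.div_lt_top hVtop (by norm_num)).ne
  set w := min (V / 2).toReal 1 with hw
  have hwpos : 0 < w := lt_min (ENNReal.toReal_pos hV2ne hV2top) one_pos
  have hwle : ENNReal.ofReal w ≤ V / 2 := by
    calc ENNReal.ofReal w ≤ ENNReal.ofReal (V / 2).toReal :=
          ENNReal.ofReal_le_ofReal (min_le_left _ _)
      _ = V / 2 := ENNReal.ofReal_toReal hV2top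
  have hev1 : ∀ᶠ n in atTop, ENNReal.ofReal w ≤ ν (E n) := by
    have h2 : V / 2 < V := ENNReal.half_lt_self hVpos.ne' hVtop
    filter_upwards [Filter.eventually_lt_of_lt_liminf (h2.trans_le hFatou)] with n hn
    exact hwle.trans hn.le
  -- the function φ
  set φ : ℝ → ℝ := fun e => (D - 3 * η) * R ^ (-((N : ℝ) * e + s)) * w ^ e with hφ
  have hφcont : Continuous φ := by
    apply Continuous.mul
    · apply Continuous.mul continuous_const
      exact Continuous.rpow continuous_const (by fun_prop) (fun x => Or.inl hRpos.ne')
    · exact Continuous.rpow continuous_const continuous_id (fun x => Or.inl hwpos.ne')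
  have hApos : (0:ℝ) < D - 3 * η := by rw [hDM]; exact hMpos
  have hφ0 : t < φ 0 := by
    have h0 : φ 0 = (D - 3 * η) * R ^ (-s) := by
      simp [hφ]
    rw [h0, hDM]
    have hRs : 0 < R ^ s := Real.rpow_pos_of_pos hRpos s
    have h1 : t₁ < M * R ^ (-s) := by
      rw [Real.rpow_neg hRpos.le, ← div_eq_mul_inv]
      exact (lt_div_iff₀ hRs).mpr hψδ
    exact ht₁t.trans h1
  have he : Tendsto (fun n => 1 / pn n) atTop (𝓝 0) := by
    exact Tendsto.congr (fun n => by simp [one_div]) hpntop.inv_tendsto_atTop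
  have hev2 : ∀ᶠ n in atTop, t < φ (1 / pn n) :=
    ((hφcont.tendsto 0).comp he).eventually_const_lt hφ0
  -- conclusion
  have : ENNReal.ofReal t ≤ Filter.liminf (fun n => gagliardoSemi Ω s (pn n) (un n)) atTop := by
    refine Filter.le_liminf_of_le (by isBoundedDefault) ?_
    filter_upwards [hev1, hev2] with n hn1 hn2
    set p := pn n with hp
    have hp0 : 0 < p := zero_lt_one.trans (hpn1 n)
    have step1 : ENNReal.ofReal ((D - 3 * η) ^ p / R ^ ((N : ℝ) + s * p) * w)
        ≤ gagliardoP Ω s p (un n) := by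
      rw [ENNReal.ofReal_mul (by positivity)]
      exact le_trans (mul_le_mul_right hn1 _) (hgag n)
    have hbasepos : (0:ℝ) < (D - 3 * η) ^ p / R ^ ((N : ℝ) + s * p) * w := by positivity
    have h1 : ENNReal.ofReal (((D - 3 * η) ^ p / R ^ ((N : ℝ) + s * p) * w) ^ (1 / p))
        ≤ gagliardoP Ω s p (un n) ^ (1 / p) := by
      rw [← ENNReal.ofReal_rpow_of_pos hbasepos]
      exact ENNReal.rpow_le_rpow step1 (by positivity)
    have halg : ((D - 3 * η) ^ p / R ^ ((N : ℝ) + s * p) * w) ^ (1 / p) = φ (1 / p) := by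
      rw [Real.mul_rpow (by positivity) hwpos.le,
        Real.div_rpow (by positivity) (by positivity),
        ← Real.rpow_mul hApos.le, ← Real.rpow_mul hRpos.le]
      have h2 : p * (1 / p) = 1 := by field_simp
      have h3 : ((N : ℝ) + s * p) * (1 / p) = (N : ℝ) * (1 / p) + s := by
        field_simp
      rw [h2, h3, Real.rpow_one]
      simp only [hφ]
      rw [Real.rpow_neg hRpos.le, div_eq_mul_inv]
    rw [halg] at h1
    calc ENNReal.ofReal t ≤ ENNReal.ofReal (φ (1 / p)) := ENNReal.ofReal_le_ofReal hn2.le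
      _ ≤ gagliardoP Ω s p (un n) ^ (1 / p) := h1
      _ = gagliardoSemi Ω s p (un n) := rfl
  rwa [htdef, ENNReal.ofReal_coe_nnreal] at this

/-- Γ-convergence-type lower semicontinuity: pointwise limits of functions with
bounded `W^{s,p_n}` seminorms (with `p_n → ∞`) are `s`-Hölder continuous. -/
theorem stmt_6 {N : ℕ} (s : ℝ) (hs0 : 0 < s) (hs1 : s < 1)
    (Ω : Set (Euc N)) (hΩ : IsOpen Ω) (hΩbd : Bornology.IsBounded Ω)
    (un : ℕ → Euc N → ℝ) (hcont : ∀ n, ContinuousOn (un n) (closure Ω))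
    (pn : ℕ → ℝ) (hpn1 : ∀ n, 1 < pn n) (hpnmono : StrictMono pn)
    (hpntop : Tendsto pn atTop atTop)
    (hfin : ∀ n, gagliardoP Ω s (pn n) (un n) ≠ ⊤)
    (hliminf : Filter.liminf (fun n => gagliardoSemi Ω s (pn n) (un n)) atTop ≠ ⊤)
    (u : Euc N → ℝ) (hu : ContinuousOn u (closure Ω))
    (hconv : ∀ x ∈ closure Ω, Tendsto (fun n => un n x) atTop (nhds (u x))) :
    holderSemi (closure Ω) s u ≤
      Filter.liminf (fun n => gagliardoSemi Ω s (pn n) (un n)) atTop := by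
  rw [holderSemi]
  refine iSup_le fun x => iSup_le fun y => iSup_le fun hxy => ?_
  obtain ⟨X, hX⟩ := x
  obtain ⟨Y, hY⟩ := y
  simp only at hxy ⊢
  obtain ⟨a, ha, hatend⟩ := mem_closure_iff_seq_limit.mp hX
  obtain ⟨b, hb, hbtend⟩ := mem_closure_iff_seq_limit.mp hY
  have hXY : 0 < ‖X - Y‖ := by rw [norm_pos_iff, sub_ne_zero]; exact hxy
  have hnorm : Tendsto (fun k => ‖a k - b k‖) atTop (𝓝 ‖X - Y‖) :=
    (hatend.sub hbtend).norm
  have hev : ∀ᶠ k in atTop, 0 < ‖a k - b k‖ := hnorm.eventually_const_lt hXY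
  have hua : Tendsto (fun k => u (a k)) atTop (𝓝 (u X)) := by
    refine ((hu X hX).tendsto).comp ?_
    exact tendsto_nhdsWithin_of_tendsto_nhds_of_eventually_within a hatend
      (Eventually.of_forall fun k => subset_closure (ha k))
  have hub : Tendsto (fun k => u (b k)) atTop (𝓝 (u Y)) := by
    refine ((hu Y hY).tendsto).comp ?_
    exact tendsto_nhdsWithin_of_tendsto_nhds_of_eventually_within b hbtend
      (Eventually.of_forall fun k => subset_closure (hb k))
  have hq : Tendsto (fun k => ENNReal.ofReal (|u (a k) - u (b k)| / ‖a k - b k‖ ^ s)) atTop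
      (𝓝 (ENNReal.ofReal (|u X - u Y| / ‖X - Y‖ ^ s))) := by
    refine (ENNReal.continuous_ofReal.tendsto _).comp ?_
    refine Tendsto.div ((hua.sub hub).abs) ?_ (Real.rpow_pos_of_pos hXY s).ne'
    exact ((Real.continuousAt_rpow_const _ _ (Or.inl hXY.ne')).tendsto).comp hnorm
  refine le_of_tendsto hq ?_
  filter_upwards [hev] with k hk
  have hne : a k ≠ b k := by
    rw [← sub_ne_zero]
    exact norm_pos_iff.mp hk
  exact key_lemma s hs0 Ω hΩ un hcont pn hpn1 hpntop u hu hconv (a k) (b k) (ha k) (hb k) hne
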